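/- Let K be a field, f(X,Y) = a_0(X) + a_1(X)Y + ... + a_m(X)Y^m and g(X,Y) = b_0(X) + b_1(X)Y + ... + b_n(X)Y^n with a_0·a_m·b_n ≠ 0, and assume f is irreducible as a polynomial in Y over K(X). Suppose a_m = p·q with p, q ∈ K[X], p irreducible over K. If deg p > (n-1)·deg q + mn·deg b_n + H_1(f), then the polynomial f(X, g(X,Y)) is irreducible over K(X). -/

import Mathlib

open Polynomial

/-- Ω(p): number of irreducible factors of `p`, counted with multiplicity. -/
noncomputable def Omega {R : Type*} [CommMonoidWithZero R]
    [UniqueFactorizationMonoid R] (p : R) : ℕ :=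
  Multiset.card (UniqueFactorizationMonoid.factors p)

/-- H₁(f) for f = a₀ + a₁Y + ⋯ + aₘYᵐ : the max of the degrees of a₀,…,a_{m-1}. -/
noncomputable def H1 {K : Type*} [Field K] (a : ℕ → Polynomial K) (m : ℕ) : ℕ :=
  (Finset.range m).sup fun i => (a i).natDegree

private lemma coeff_sumCX {R : Type*} [Semiring R] (c : ℕ → R) (N j : ℕ) :
    (∑ i ∈ Finset.range (N + 1), C (c i) * X ^ i).coeff j = if j ≤ N then c j else 0 := by
  rw [finset_sum_coeff]
  simp only [coeff_C_mul, coeff_X_pow, mul_ite, mul_one, mul_zero]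
  rw [Finset.sum_ite_eq (Finset.range (N + 1)) j c]
  simp [Nat.lt_succ_iff]

private lemma natDegree_sumCX {R : Type*} [Semiring R] (c : ℕ → R) (N : ℕ) (h : c N ≠ 0) :
    (∑ i ∈ Finset.range (N + 1), C (c i) * X ^ i).natDegree = N := by
  apply le_antisymm
  · rw [natDegree_le_iff_coeff_eq_zero]
    intro j hj
    rw [coeff_sumCX]
    simp [Nat.not_le.mpr hj]
  · apply le_natDegree_of_ne_zero
    rw [coeff_sumCX]
    simpa using h

private lemma irreducible_unit_mul {M : Type*} [CommMonoid M] {u q : M} (hu : IsUnit u)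
    (h : Irreducible q) : Irreducible (u * q) := by
  refine Associated.irreducible ?_ h
  exact ⟨hu.unit, by rw [IsUnit.unit_spec, mul_comm]⟩

private lemma aeval_self_eq_comp {L : Type*} [CommSemiring L] (P u : L[X]) :
    (aeval u) P = P.comp u := by
  rw [aeval_def, algebraMap_eq]; rfl

private lemma irreducible_comp_linear {L : Type*} [Field L] {P : L[X]} (hP : Irreducible P)
    (c d : L) (hc : c ≠ 0) : Irreducible (P.comp (C c * X + C d)) := by
  have hXu : (aeval ((C c * X + C d : L[X]))) ((C c⁻¹ * X + C (-(c⁻¹ * d)) : L[X])) = X := by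
    simp only [map_add, map_mul, aeval_X, aeval_C, algebraMap_eq]
    rw [mul_add, ← mul_assoc, ← C_mul, inv_mul_cancel₀ hc, C_1, one_mul]
    rw [← C_mul, add_assoc, ← C_add]
    simp
  have hXv : (aeval ((C c⁻¹ * X + C (-(c⁻¹ * d)) : L[X]))) ((C c * X + C d : L[X])) = X := by
    simp only [map_add, map_mul, aeval_X, aeval_C, algebraMap_eq]
    rw [mul_add, ← mul_assoc, ← C_mul, mul_inv_cancel₀ hc, C_1, one_mul]
    rw [← C_mul, add_assoc, ← C_add]
    have hcd : c * -(c⁻¹ * d) + d = 0 := by field_simp; ring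
    rw [hcd, C_0, add_zero]
  let e : L[X] ≃ₐ[L] L[X] :=
    AlgEquiv.ofAlgHom (aeval (C c * X + C d)) (aeval (C c⁻¹ * X + C (-(c⁻¹ * d))))
      (Polynomial.algHom_ext (by
        simp only [AlgHom.coe_comp, Function.comp_apply, aeval_X, AlgHom.coe_id, id_eq]
        exact hXu))
      (Polynomial.algHom_ext (by
        simp only [AlgHom.coe_comp, Function.comp_apply, aeval_X, AlgHom.coe_id, id_eq]
        exact hXv))
  have hi : Irreducible (e P) := (MulEquiv.irreducible_iff e).mpr hP
  rwa [show e P = P.comp (C c * X + C d) from aeval_self_eq_comp P _] at hi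

theorem stmt4 {K : Type*} [Field K] (m n : ℕ) (hm : 0 < m) (hn : 0 < n)
    (a b : ℕ → Polynomial K) (p q : Polynomial K)
    (ha0 : a 0 ≠ 0) (ham : a m ≠ 0) (hbn : b n ≠ 0)
    (hpq : a m = p * q) (hp : Irreducible p)
    (f : Polynomial (Polynomial K)) (g : Polynomial (Polynomial K))
    (hf : f = ∑ i ∈ Finset.range (m + 1), Polynomial.C (a i) * Polynomial.X ^ i)
    (hg : g = ∑ j ∈ Finset.range (n + 1), Polynomial.C (b j) * Polynomial.X ^ j)
    (hirr : Irreducible (f.map (algebraMap (Polynomial K) (RatFunc K))))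
    (hdeg : p.natDegree > (n - 1) * q.natDegree + m * n * (b n).natDegree + H1 a m) :
    Irreducible ((Polynomial.aeval g f).map (algebraMap (Polynomial K) (RatFunc K))) := by
  classical
  set φ := algebraMap (Polynomial K) (RatFunc K) with hφ
  have hφinj : Function.Injective φ := IsFractionRing.injective _ _
  have hfc : ∀ j, f.coeff j = if j ≤ m then a j else 0 := fun j => by
    rw [hf]; exact coeff_sumCX a m j
  have hgc : ∀ j, g.coeff j = if j ≤ n then b j else 0 := fun j => by
    rw [hg]; exact coeff_sumCX b n j
  have hfd : f.natDegree = m := by rw [hf]; exact natDegree_sumCX a m ham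
  have hgd : g.natDegree = n := by rw [hg]; exact natDegree_sumCX b n hbn
  have hflc : f.leadingCoeff = a m := by rw [leadingCoeff, hfd, hfc]; simp
  have hglc : g.leadingCoeff = b n := by rw [leadingCoeff, hgd, hgc]; simp
  have hf0 : f ≠ 0 := fun h => ham (by rw [← hflc, h, leadingCoeff_zero])
  have hg0 : g ≠ 0 := fun h => hbn (by rw [← hglc, h, leadingCoeff_zero])
  have hcomp : (Polynomial.aeval g f) = f.comp g := aeval_self_eq_comp f g
  rw [hcomp, Polynomial.map_comp]
  have hprime : Prime p := UniqueFactorizationMonoid.irreducible_iff_prime.mp hp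
  have hq0 : q ≠ 0 := fun h => ham (by rw [hpq, h, mul_zero])
  have hWlc : (f.comp g).leadingCoeff = a m * b n ^ m := by
    rw [leadingCoeff_comp (by rw [hgd]; omega), hflc, hglc, hfd]
  have hfg0 : f.comp g ≠ 0 := fun h => by
    rw [h, leadingCoeff_zero] at hWlc
    exact (mul_ne_zero ham (pow_ne_zero _ hbn)) hWlc.symm
  have hpa0 : ¬ p ∣ a 0 := by
    intro hd
    have h1 : p.natDegree ≤ (a 0).natDegree := natDegree_le_of_dvd hd ha0
    have h2 : (a 0).natDegree ≤ H1 a m :=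
      Finset.le_sup (f := fun i => (a i).natDegree) (Finset.mem_range.mpr hm)
    exact absurd hdeg (not_lt.mpr (le_trans (le_trans h1 h2) (Nat.le_add_left _ _)))
  by_cases hn1 : n = 1
  · subst hn1
    have hφb1 : φ (b 1) ≠ 0 := fun h => hbn (hφinj (by rw [h, map_zero]))
    have hg2 : g.map φ = C (φ (b 1)) * X + C (φ (b 0)) := by
      rw [hg]
      simp only [Finset.sum_range_succ, Finset.sum_range_zero, zero_add, pow_zero, mul_one,
        pow_one, Polynomial.map_add, Polynomial.map_mul, Polynomial.map_C, Polynomial.map_X]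
      ring
    rw [hg2]
    exact irreducible_comp_linear hirr _ _ hφb1
  · have hn2 : 2 ≤ n := by omega
    have hpq' : ¬ p ∣ q := by
      intro hd
      have h1 : p.natDegree ≤ q.natDegree := natDegree_le_of_dvd hd hq0
      have h2 : q.natDegree ≤ (n - 1) * q.natDegree :=
        Nat.le_mul_of_pos_left _ (by omega)
      exact absurd hdeg (not_lt.mpr (le_trans (le_trans h1 h2)
        (le_trans (Nat.le_add_right _ _) (Nat.le_add_right _ _))))
    have hpbn : ¬ p ∣ b n := by
      intro hd
      have h1 : p.natDegree ≤ (b n).natDegree := natDegree_le_of_dvd hd hbn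
      have h2 : (b n).natDegree ≤ m * n * (b n).natDegree :=
        Nat.le_mul_of_pos_left _ (Nat.mul_pos hm hn)
      exact absurd hdeg (not_lt.mpr (le_trans (le_trans h1 h2)
        (le_trans (Nat.le_add_left _ _) (Nat.le_add_right _ _))))
    letI : NormalizedGCDMonoid (Polynomial K) :=
      UniqueFactorizationMonoid.toNormalizedGCDMonoid _
    by_contra hWirr
    set S := UniqueFactorizationMonoid.factors (f.comp g) with hS
    have hassoc : Associated S.prod (f.comp g) := UniqueFactorizationMonoid.factors_prod hfg0
    have hprim : ∀ D : Polynomial (Polynomial K), Irreducible D → D.natDegree ≠ 0 →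
        D.IsPrimitive := by
      intro D hDirr hDdeg r hr
      rcases hr with ⟨e, he⟩
      rcases hDirr.isUnit_or_isUnit he with h | h
      · exact isUnit_C.mp h
      · exfalso
        apply hDdeg
        have h2 : D.natDegree ≤ (C r).natDegree + e.natDegree := by
          rw [he]; exact natDegree_mul_le
        simpa [natDegree_C, natDegree_eq_zero_of_isUnit h] using h2
    have hexists : ∃ D, D ∈ S ∧ D.natDegree ≠ 0 ∧ ¬ p ∣ D.leadingCoeff := by
      by_contra hno
      push_neg at hno
      set N := S.filter (fun D => D.natDegree ≠ 0) with hN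
      have hmemN : ∀ D ∈ N, D ∈ S ∧ D.natDegree ≠ 0 ∧ p ∣ D.leadingCoeff := by
        intro D hD
        have h1 := Multiset.mem_filter.mp hD
        exact ⟨h1.1, h1.2, hno D h1.1 h1.2⟩
      have hS0 : S.prod ≠ 0 := by
        intro h0
        rw [h0] at hassoc
        exact hfg0 ((associated_zero_iff_eq_zero _).mp hassoc.symm)
      have hdegfg : (f.comp g).natDegree = m * n := by rw [natDegree_comp, hfd, hgd]
      rcases hcard : Multiset.card N with _ | k
      · -- no nonconstant factor : degree contradiction
        have hN0 : N = 0 := Multiset.card_eq_zero.mp hcard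
        have hall : ∀ D ∈ S, D.natDegree = 0 := by
          intro D hD
          by_contra hne
          have : D ∈ N := Multiset.mem_filter.mpr ⟨hD, hne⟩
          rw [hN0] at this
          exact Multiset.notMem_zero D this
        have h1 : S.prod.natDegree ≤ 0 := by
          refine le_trans (natDegree_multiset_prod_le S) (le_of_eq ?_)
          apply Multiset.sum_eq_zero
          intro d hd
          obtain ⟨D, hDmem, rfl⟩ := Multiset.mem_map.mp hd
          exact hall D hDmem
        have h2 : (f.comp g).natDegree ≤ S.prod.natDegree :=
          natDegree_le_of_dvd hassoc.symm.dvd hS0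
        rw [hdegfg] at h2
        have : 1 ≤ m * n := Nat.mul_pos hm hn
        omega
      rcases k with _ | k
      · -- exactly one nonconstant factor : f ∘ g would be irreducible over RatFunc K
        obtain ⟨D0, hD0⟩ := Multiset.card_eq_one.mp hcard
        have hD0N : D0 ∈ N := by rw [hD0]; exact Multiset.mem_singleton_self D0
        have hD0S : D0 ∈ S := (hmemN D0 hD0N).1
        have hD0deg : D0.natDegree ≠ 0 := (hmemN D0 hD0N).2.1
        have hD0irr : Irreducible D0 := UniqueFactorizationMonoid.irreducible_of_factor _ hD0S
        set Cs := S.filter (fun D => ¬ D.natDegree ≠ 0) with hCs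
        have hsplit : N + Cs = S := Multiset.filter_add_not (fun D => D.natDegree ≠ 0) S
        have hprodS : S.prod = D0 * Cs.prod := by
          rw [← hsplit, Multiset.prod_add, hD0, Multiset.prod_singleton]
        have hunit : IsUnit ((Cs.map (Polynomial.map φ)).prod) := by
          apply Multiset.prod_induction IsUnit _ (fun _ _ ha hb => ha.mul hb) isUnit_one
          intro E hE
          obtain ⟨Dc, hDcmem, rfl⟩ := Multiset.mem_map.mp hE
          have h1 := Multiset.mem_filter.mp hDcmem
          have hdc : Dc.natDegree = 0 := by
            by_contra hcon; exact h1.2 hcon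
          obtain ⟨r, hr⟩ := natDegree_eq_zero.mp hdc
          have hDc0 : Dc ≠ 0 :=
            (UniqueFactorizationMonoid.irreducible_of_factor _ h1.1).ne_zero
          have hr0 : r ≠ 0 := by
            intro h0; apply hDc0; rw [← hr, h0, C_0]
          rw [← hr, Polynomial.map_C]
          exact isUnit_C.mpr (isUnit_iff_ne_zero.mpr (fun h => hr0 (hφinj (by rw [h, map_zero]))))
        apply hWirr
        rw [← Polynomial.map_comp]
        have h1 : Associated (S.prod.map φ) ((f.comp g).map φ) := by
          have := hassoc.map (Polynomial.mapRingHom φ)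
          simpa using this
        have h2 : Associated (D0.map φ) (S.prod.map φ) := by
          rw [hprodS, Polynomial.map_mul, Polynomial.map_multiset_prod]
          exact ⟨hunit.unit, by rw [IsUnit.unit_spec]⟩
        have hD0mapirr : Irreducible (D0.map φ) :=
          ((hprim D0 hD0irr hD0deg).irreducible_iff_irreducible_map_fraction_map).mp hD0irr
        exact (h2.trans h1).irreducible hD0mapirr
      · -- at least two nonconstant factors : p² divides the leading coefficient
        obtain ⟨D1, hD1⟩ := Multiset.card_pos_iff_exists_mem.mp (by rw [hcard]; omega)
        obtain ⟨N', hN'⟩ := Multiset.exists_cons_of_mem hD1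
        have hcard' : 0 < Multiset.card N' := by
          rw [hN'] at hcard
          simp only [Multiset.card_cons] at hcard
          omega
        obtain ⟨D2, hD2⟩ := Multiset.card_pos_iff_exists_mem.mp hcard'
        have hleS : (D1 ::ₘ {D2}) ≤ S := by
          refine le_trans ?_ (Multiset.filter_le (fun D => D.natDegree ≠ 0) S)
          rw [← hN, hN']
          exact Multiset.cons_le_cons D1 (Multiset.singleton_le.mpr hD2)
        have hdvd1 : D1.leadingCoeff * D2.leadingCoeff ∣
            (S.map (fun h => h.leadingCoeff)).prod := by
          have h3 := Multiset.prod_dvd_prod_of_le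
            (Multiset.map_le_map (f := fun h => h.leadingCoeff) hleS)
          simpa using h3
        have hpD1 : p ∣ D1.leadingCoeff := (hmemN D1 (hN' ▸ Multiset.mem_cons_self _ _)).2.2
        have hpD2 : p ∣ D2.leadingCoeff := by
          have : D2 ∈ N := by rw [hN']; exact Multiset.mem_cons_of_mem hD2
          exact (hmemN D2 this).2.2
        have hlcdvd : (S.map (fun h => h.leadingCoeff)).prod ∣ (f.comp g).leadingCoeff := by
          obtain ⟨E, hE⟩ := hassoc.dvd
          rw [hE, leadingCoeff_mul, ← leadingCoeff_multiset_prod]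
          exact Dvd.intro _ rfl
        have hppdvd : p * p ∣ a m * b n ^ m := by
          rw [← hWlc]
          exact dvd_trans (mul_dvd_mul hpD1 hpD2) (dvd_trans hdvd1 hlcdvd)
        rw [hpq, mul_assoc] at hppdvd
        have h4 : p ∣ q * b n ^ m := (mul_dvd_mul_iff_left hp.ne_zero).mp hppdvd
        rcases hprime.2.2 _ _ h4 with h | h
        · exact hpq' h
        · exact hpbn (hprime.dvd_of_dvd_pow h)
    obtain ⟨D, hDS, hDdeg, hDlc⟩ := hexists
    have hDirr : Irreducible D := UniqueFactorizationMonoid.irreducible_of_factor _ hDS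
    have hDdvd : D ∣ f.comp g := (Multiset.dvd_prod hDS).trans hassoc.dvd
    have hD0' : D ≠ 0 := hDirr.ne_zero
    have hDmapirr : Irreducible (D.map φ) :=
      ((hprim D hDirr hDdeg).irreducible_iff_irreducible_map_fraction_map).mp hDirr
    haveI : Fact (Irreducible (D.map φ)) := ⟨hDmapirr⟩
    set β : AdjoinRoot (D.map φ) := AdjoinRoot.root (D.map φ) with hβdef
    have hβD : (Polynomial.aeval β) D = 0 := by
      rw [← Polynomial.aeval_map_algebraMap (RatFunc K) β D, ← hφ, hβdef]
      exact (AdjoinRoot.aeval_eq (f := D.map φ) (D.map φ)).trans AdjoinRoot.mk_self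
    set u := D.leadingCoeff with hu
    have hu0 : u ≠ 0 := leadingCoeff_ne_zero.mpr hD0'
    set γ : (AdjoinRoot (D.map φ)) := u • β with hγdef
    have hγ : IsIntegral (Polynomial K) γ := isIntegral_leadingCoeff_smul D β hβD
    set t : (AdjoinRoot (D.map φ)) := (Polynomial.aeval β) g with ht
    set x : (AdjoinRoot (D.map φ)) := (algebraMap (Polynomial K) (AdjoinRoot (D.map φ)) u) ^ n * t with hx
    have hxsum : x = ∑ j ∈ Finset.range (n + 1),
        algebraMap (Polynomial K) (AdjoinRoot (D.map φ)) (b j * u ^ (n - j)) * γ ^ j := by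
      rw [hx, ht, hg, map_sum, Finset.mul_sum]
      refine Finset.sum_congr rfl ?_
      intro j hj
      have hjn : j ≤ n := Nat.lt_succ_iff.mp (Finset.mem_range.mp hj)
      have hpow : (algebraMap (Polynomial K) (AdjoinRoot (D.map φ)) u) ^ (n - j) *
          (algebraMap (Polynomial K) (AdjoinRoot (D.map φ)) u) ^ j = (algebraMap (Polynomial K) (AdjoinRoot (D.map φ)) u) ^ n := by
        rw [← pow_add, Nat.sub_add_cancel hjn]
      rw [map_mul, aeval_C, map_pow, aeval_X, hγdef, Algebra.smul_def, mul_pow,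
        map_mul (algebraMap (Polynomial K) (AdjoinRoot (D.map φ))), map_pow]
      rw [← hpow]
      ring
    have hxint : IsIntegral (Polynomial K) x := by
      have hmem : x ∈ integralClosure (Polynomial K) (AdjoinRoot (D.map φ)) := by
        rw [hxsum]
        refine Subalgebra.sum_mem _ ?_
        intro j _
        exact mul_mem (Subalgebra.algebraMap_mem _ _)
          (pow_mem (show γ ∈ integralClosure (Polynomial K) (AdjoinRoot (D.map φ)) from hγ) j)
      exact hmem
    have hFt : (Polynomial.aeval t) (f.map φ) = 0 := by
      rw [Polynomial.aeval_map_algebraMap, ht, ← Polynomial.aeval_comp]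
      obtain ⟨E, hE⟩ := hDdvd
      rw [hE, map_mul, hβD, zero_mul]
    have hFdeg : (f.map φ).natDegree = m := by rw [natDegree_map_eq_of_injective hφinj, hfd]
    have hFlcval : (f.map φ).leadingCoeff = φ (a m) := by
      rw [leadingCoeff, hFdeg, coeff_map, hfc]; simp
    have hφam : φ (a m) ≠ 0 := fun h => ham (hφinj (by rw [h, map_zero]))
    have hφu : φ u ≠ 0 := fun h => hu0 (hφinj (by rw [h, map_zero]))
    set c : RatFunc K := (φ u)⁻¹ ^ n with hc
    have hc0 : c ≠ 0 := pow_ne_zero _ (inv_ne_zero hφu)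
    set Fhat : Polynomial (RatFunc K) := f.map φ * C ((φ (a m))⁻¹) with hFhat
    have hFhatirr : Irreducible Fhat := by
      rw [hFhat, mul_comm]
      exact irreducible_unit_mul (isUnit_C.mpr (isUnit_iff_ne_zero.mpr (inv_ne_zero hφam))) hirr
    have hCam : (C ((φ (a m))⁻¹) : Polynomial (RatFunc K)) ≠ 0 := by
      rw [Ne, C_eq_zero]
      exact inv_ne_zero hφam
    have hFmap0 : f.map φ ≠ 0 := fun h => by
      rw [h, leadingCoeff_zero] at hFlcval
      exact hφam hFlcval.symm
    have hFhatdeg : Fhat.natDegree = m := by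
      rw [hFhat, natDegree_mul hFmap0 hCam, natDegree_C, add_zero, hFdeg]
    have hFhatlc : Fhat.leadingCoeff = 1 := by
      rw [hFhat, leadingCoeff_mul, leadingCoeff_C, hFlcval, mul_inv_cancel₀ hφam]
    set Fu : Polynomial (RatFunc K) := C ((φ u) ^ (n * m)) * (Fhat.comp (C c * X)) with hFu
    have hFuirr : Irreducible Fu := by
      have h1 : Irreducible (Fhat.comp (C c * X + C 0)) :=
        irreducible_comp_linear hFhatirr c 0 hc0
      rw [C_0, add_zero] at h1
      exact irreducible_unit_mul
        (isUnit_C.mpr (isUnit_iff_ne_zero.mpr (pow_ne_zero _ hφu))) h1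
    have hlinlc : (C c * X : Polynomial (RatFunc K)).leadingCoeff = c := by
      rw [leadingCoeff_mul, leadingCoeff_C, leadingCoeff_X, mul_one]
    have hlindeg : (C c * X : Polynomial (RatFunc K)).natDegree = 1 := natDegree_C_mul_X c hc0
    have hFumonic : Fu.Monic := by
      show Fu.leadingCoeff = 1
      rw [hFu, leadingCoeff_mul, leadingCoeff_C,
        leadingCoeff_comp (by rw [hlindeg]; omega), hFhatlc, one_mul, hlinlc, hFhatdeg, hc,
        ← pow_mul, inv_pow, mul_inv_cancel₀ (pow_ne_zero _ hφu)]
    have hcx : algebraMap (RatFunc K) (AdjoinRoot (D.map φ)) c * x = t := by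
      rw [hx, hc]
      have halg : algebraMap (Polynomial K) (AdjoinRoot (D.map φ)) u = algebraMap (RatFunc K) (AdjoinRoot (D.map φ)) (φ u) :=
        IsScalarTower.algebraMap_apply (Polynomial K) (RatFunc K) (AdjoinRoot (D.map φ)) u
      rw [halg, map_pow, ← mul_assoc, ← mul_pow, ← map_mul, inv_mul_cancel₀ hφu, map_one,
        one_pow, one_mul]
    have hFux : (Polynomial.aeval x) Fu = 0 := by
      rw [hFu, map_mul, aeval_C, Polynomial.aeval_comp]
      have h2 : (Polynomial.aeval x) (C c * X) = t := by
        rw [map_mul, aeval_C, aeval_X, hcx]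
      rw [h2, hFhat, map_mul, aeval_C, hFt, zero_mul, mul_zero]
    have hminLx : Fu = minpoly (RatFunc K) x :=
      minpoly.eq_of_irreducible_of_monic hFuirr hFux hFumonic
    have hmin2 : minpoly (RatFunc K) x = (minpoly (Polynomial K) x).map φ := by
      have h3 := minpoly.isIntegrallyClosed_eq_field_fractions (RatFunc K) (AdjoinRoot (D.map φ)) hxint
      simpa using h3
    have hcoeff : Fu.coeff 0 = φ (a 0) * (φ (a m))⁻¹ * (φ u) ^ (n * m) := by
      rw [hFu, coeff_C_mul, coeff_zero_eq_eval_zero, eval_comp]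
      have h4 : (C c * X : Polynomial (RatFunc K)).eval 0 = 0 := by simp
      rw [h4, ← coeff_zero_eq_eval_zero, hFhat, coeff_mul_C, coeff_map, hfc]
      simp only [Nat.zero_le, if_true]
      ring
    set w := (minpoly (Polynomial K) x).coeff 0 with hw
    have hkey : φ (a 0) * (φ (a m))⁻¹ * (φ u) ^ (n * m) = φ w := by
      rw [← hcoeff, hminLx, hmin2, coeff_map]
    have hkey2 : φ (a 0) * (φ u) ^ (n * m) = φ w * φ (a m) := by
      field_simp at hkey
      linear_combination hkey
    have hfinal : a 0 * u ^ (n * m) = w * a m := by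
      apply hφinj
      rw [map_mul, map_mul, map_pow]
      exact hkey2
    have hpdvd : p ∣ a 0 * u ^ (n * m) := by
      rw [hfinal, hpq]
      exact ⟨w * q, by ring⟩
    rcases hprime.2.2 _ _ hpdvd with h | h
    · exact hpa0 h
    · exact hDlc (hprime.dvd_of_dvd_pow h)
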